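/- Let Γ be positive definite r×r, Δ₁,…,Δ_ℓ ∈ ℝ^r, and constants c_{ij} (1 ≤ i ≤ j ≤ ℓ). For a₁,…,a_ℓ ∈ ℝ^r define the symmetric ℓ×ℓ matrix W(a) with W_{ij} = a_iᵀΓa_j − a_iᵀΔ_j − a_jᵀΔ_i + c_{ij}. Suppose W(a*) is positive definite where a*_i = Γ⁻¹Δ_i. Then for every choice of a₁,…,a_ℓ with W(a) positive semidefinite, det W(a*) ≤ det W(a) and trace W(a*) ≤ trace W(a); i.e., the simultaneous BLIPs minimize both the determinant and the trace of the MSPE matrix. -/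

import Mathlib

open Matrix

section Aux

variable {n : Type*} [Fintype n] [DecidableEq n]

/-- Diagonal entries of a PSD real matrix are nonnegative. -/
lemma psd_diag_nonneg {P : Matrix n n ℝ} (hP : P.PosSemidef) (i : n) : 0 ≤ P i i := by
  have := hP.dotProduct_mulVec_nonneg (Pi.single i 1)
  simpa [dotProduct_single, mulVec_single] using this

/-- Trace monotonicity under the Loewner order. -/
lemma trace_le_of_sub_posSemidef {A B : Matrix n n ℝ} (h : (B - A).PosSemidef) :
    A.trace ≤ B.trace := by
  have h1 : 0 ≤ (B - A).trace := by
    rw [Matrix.trace]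
    exact Finset.sum_nonneg fun i _ => psd_diag_nonneg h i
  have : (B - A).trace = B.trace - A.trace := by simp [Matrix.trace_sub]
  linarith [this ▸ h1]

/-- `det (1 + M) ≥ 1` for PSD real `M`. -/
lemma one_le_det_one_add {M : Matrix n n ℝ} (hM : M.PosSemidef) : 1 ≤ (1 + M).det := by
  have hH := hM.1
  set U : Matrix n n ℝ := (hH.eigenvectorUnitary : Matrix n n ℝ)
  have hUU : U * star U = 1 := (Matrix.mem_unitaryGroup_iff).mp hH.eigenvectorUnitary.2
  have hspec : M = U * Matrix.diagonal (RCLike.ofReal ∘ hH.eigenvalues) * star U :=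
    hH.spectral_theorem
  have h1 : (1 + M) = U * (1 + Matrix.diagonal (RCLike.ofReal ∘ hH.eigenvalues)) * star U := by
    rw [Matrix.mul_add, Matrix.add_mul, Matrix.mul_one, hUU, ← hspec]
  have hdet : (1 + M).det = ((1 : Matrix n n ℝ) + Matrix.diagonal (RCLike.ofReal ∘ hH.eigenvalues)).det := by
    rw [h1, Matrix.det_mul, Matrix.det_mul, mul_comm (U.det), mul_assoc, ← Matrix.det_mul,
      hUU, Matrix.det_one, mul_one]
  rw [hdet]
  have : (1 : Matrix n n ℝ) + Matrix.diagonal (RCLike.ofReal ∘ hH.eigenvalues)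
      = Matrix.diagonal (fun i => 1 + hH.eigenvalues i) := by
    rw [← Matrix.diagonal_one, Matrix.diagonal_add]
    rfl
  rw [this, Matrix.det_diagonal]
  calc (1:ℝ) = ∏ _i : n, (1:ℝ) := by simp
    _ ≤ ∏ i : n, (1 + hH.eigenvalues i) :=
      Finset.prod_le_prod (fun i _ => zero_le_one)
        (fun i _ => by linarith [hM.eigenvalues_nonneg i])

open scoped MatrixOrder in
/-- Determinant monotonicity under the Loewner order, given the smaller matrix PosDef. -/
lemma det_le_of_sub_posSemidef {A B : Matrix n n ℝ} (hA : A.PosDef)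
    (h : (B - A).PosSemidef) : A.det ≤ B.det := by
  set S := CFC.sqrt A with hSdef
  have hS : S.PosSemidef := (CFC.sqrt_nonneg A).posSemidef
  have hSS : S * S = A := CFC.sqrt_mul_sqrt_self A hA.posSemidef.nonneg
  have hdet2 : A.det = S.det * S.det := by rw [← hSS, Matrix.det_mul]
  have hdetS : S.det ≠ 0 := by
    intro h0
    have hpos := hA.det_pos
    rw [hdet2, h0, mul_zero] at hpos
    exact lt_irrefl 0 hpos
  have hSunit : IsUnit S := (Matrix.isUnit_iff_isUnit_det _).mpr hdetS.isUnit
  have hSinv : S * S⁻¹ = 1 := Matrix.mul_nonsing_inv _ hdetS.isUnit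
  have hSinv' : S⁻¹ * S = 1 := Matrix.nonsing_inv_mul _ hdetS.isUnit
  have hSinvH : (S⁻¹)ᴴ = S⁻¹ := by
    rw [Matrix.conjTranspose_nonsing_inv, hS.1]
  set M := S⁻¹ * (B - A) * (S⁻¹)ᴴ with hMdef
  have hM : M.PosSemidef := h.mul_mul_conjTranspose_same S⁻¹
  have hB : B = S * (1 + M) * S := by
    rw [hMdef, hSinvH]
    rw [Matrix.mul_add, Matrix.mul_one, Matrix.add_mul, hSS]
    rw [show S * (S⁻¹ * (B - A) * S⁻¹) * S = (S * S⁻¹) * (B - A) * (S⁻¹ * S) by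
      noncomm_ring]
    rw [hSinv, hSinv', Matrix.one_mul, Matrix.mul_one]
    abel
  have hdetB : B.det = A.det * (1 + M).det := by
    rw [hB, Matrix.det_mul, Matrix.det_mul, ← hSS, Matrix.det_mul]
    ring
  rw [hdetB]
  nlinarith [one_le_det_one_add hM, hA.det_pos]

end Aux

/-- The simultaneous BLIPs `a*_i = Γ⁻¹Δ_i` minimize both the determinant and the
trace of the MSPE matrix `W(a)` among all predictor coefficient families `a`
with `W(a)` positive semidefinite, provided `W(a*)` is positive definite. -/
theorem simultaneous_blip_det_trace_efficient {r ℓ : ℕ}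
    (Γ : Matrix (Fin r) (Fin r) ℝ) (hΓ : Γ.PosDef)
    (Δ : Fin ℓ → Fin r → ℝ) (c : Fin ℓ → Fin ℓ → ℝ)
    (hc : ∀ i j, c i j = c j i)
    (W : (Fin ℓ → Fin r → ℝ) → Matrix (Fin ℓ) (Fin ℓ) ℝ)
    (hW : ∀ a, W a = Matrix.of fun i j =>
      a i ⬝ᵥ (Γ *ᵥ a j) - a i ⬝ᵥ Δ j - a j ⬝ᵥ Δ i + c i j)
    (astar : Fin ℓ → Fin r → ℝ) (hastar : ∀ i, astar i = Γ⁻¹ *ᵥ Δ i)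
    (hWstar : (W astar).PosDef) :
    ∀ a, (W a).PosSemidef → (W astar).det ≤ (W a).det ∧
      (W astar).trace ≤ (W a).trace := by
  intro a _
  have hdetΓ : IsUnit Γ.det := hΓ.det_pos.ne'.isUnit
  have hΓT : Γᵀ = Γ := by
    have := hΓ.isHermitian
    rwa [Matrix.IsHermitian, Matrix.conjTranspose_eq_transpose_of_trivial] at this
  -- symmetry of Γ in dot products
  have key2 : ∀ x y : Fin r → ℝ, x ⬝ᵥ (Γ *ᵥ y) = y ⬝ᵥ (Γ *ᵥ x) := by
    intro x y
    rw [Matrix.dotProduct_mulVec, ← Matrix.mulVec_transpose, hΓT, dotProduct_comm]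
  -- Γ times BLIP coefficients
  have key1 : ∀ j, Γ *ᵥ astar j = Δ j := by
    intro j
    rw [hastar, Matrix.mulVec_mulVec, Matrix.mul_nonsing_inv _ hdetΓ, Matrix.one_mulVec]
  -- symmetry of Γ⁻¹ in dot products
  have hΓinvT : (Γ⁻¹)ᵀ = Γ⁻¹ := by rw [Matrix.transpose_nonsing_inv, hΓT]
  have key3 : ∀ i j, astar j ⬝ᵥ Δ i = astar i ⬝ᵥ Δ j := by
    intro i j
    rw [hastar, hastar, dotProduct_comm, Matrix.dotProduct_mulVec,
      ← Matrix.mulVec_transpose, hΓinvT, dotProduct_comm]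
  -- the Gram matrix of deviations
  set Dm : Matrix (Fin ℓ) (Fin r) ℝ := Matrix.of (fun i => a i - astar i) with hDm
  have hGram : W a - W astar = Dm * Γ * Dmᴴ := by
    ext i j
    have hmul : (Dm * Γ * Dmᴴ) i j = (a i - astar i) ⬝ᵥ (Γ *ᵥ (a j - astar j)) := by
      rw [Matrix.mul_assoc, Matrix.mul_apply]
      simp only [Matrix.mul_apply, Matrix.conjTranspose_apply, star_trivial,
        Matrix.mulVec, dotProduct, hDm, Matrix.of_apply]
    rw [Matrix.sub_apply, hmul, hW, hW]
    simp only [Matrix.of_apply]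
    rw [Matrix.mulVec_sub, dotProduct_sub, sub_dotProduct,
      sub_dotProduct, key1 j]
    have e1 : astar i ⬝ᵥ (Γ *ᵥ a j) = a j ⬝ᵥ Δ i := by
      rw [key2, key1, dotProduct_comm]
    have e2 : astar i ⬝ᵥ (Γ *ᵥ astar j) = astar i ⬝ᵥ Δ j := by rw [key1]
    have e3 := key3 i j
    rw [e1]
    linarith [e2, e3]
  have hpsd : (W a - W astar).PosSemidef := hGram ▸ hΓ.posSemidef.mul_mul_conjTranspose_same Dm
  exact ⟨det_le_of_sub_posSemidef hWstar hpsd, trace_le_of_sub_posSemidef hpsd⟩
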